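/- The four eigenvalues of H⁽⁴⁾(a) = [[2-27ia, -1, 0, 0], [-1, 2-ia, -1, 0], [0, -1, 2+ia, -1], [0, 0, -1, 2+27ia]] are given by 2 ∓ (1/2)·√(6 - 1460a² ± 2√(529984a⁴ - 1680a² + 5)) for the four sign choices, whenever these expressions are well-defined. -/

import Mathlib

open Matrix Complex Polynomial

noncomputable def H4 (a : ℝ) : Matrix (Fin 4) (Fin 4) ℂ :=
  !![2 - 27 * a * Complex.I, -1, 0, 0;
     -1, 2 - a * Complex.I, -1, 0;
     0, -1, 2 + a * Complex.I, -1;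
     0, 0, -1, 2 + 27 * a * Complex.I]

lemma mem_spectrum_of_eval (M : Matrix (Fin 4) (Fin 4) ℂ) (μ : ℂ)
    (h : M.charpoly.eval μ = 0) : μ ∈ spectrum ℂ M := by
  rw [spectrum.mem_iff]
  intro hU
  rw [Matrix.isUnit_iff_isUnit_det] at hU
  have hd : (algebraMap ℂ (Matrix (Fin 4) (Fin 4) ℂ) μ - M).det = 0 := by
    rw [← h, Matrix.charpoly, _root_.eval_det, matPolyEquiv_charmatrix]
    simp [Matrix.scalar]
    congr 1
  rw [hd] at hU
  exact (not_isUnit_zero hU)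

lemma charpoly_H4 (a : ℝ)
    (hdisc : 0 ≤ 529984 * a ^ 4 - 1680 * a ^ 2 + 5) :
    (H4 a).charpoly =
        ((X - C 2) ^ 2 -
            C (((6 - 1460 * a ^ 2 + 2 * Real.sqrt (529984 * a ^ 4 - 1680 * a ^ 2 + 5)) / 4 : ℝ) : ℂ)) *
        ((X - C 2) ^ 2 -
            C (((6 - 1460 * a ^ 2 - 2 * Real.sqrt (529984 * a ^ 4 - 1680 * a ^ 2 + 5)) / 4 : ℝ) : ℂ)) := by
  have h3 : (Fin.succAbove 1 2 : Fin 4) = 3 := by decide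
  have hcm : (H4 a).charmatrix =
      !![X - C (2 - 27 * a * Complex.I), C 1, 0, 0;
         C 1, X - C (2 - a * Complex.I), C 1, 0;
         0, C 1, X - C (2 + a * Complex.I), C 1;
         0, 0, C 1, X - C (2 + 27 * a * Complex.I)] := by
    ext i j
    fin_cases i <;> fin_cases j <;>
      simp [charmatrix_apply, H4, Matrix.vecHead, Matrix.vecTail]
  rw [Matrix.charpoly, hcm]
  simp [Matrix.det_succ_row_zero, Fin.sum_univ_succ, h3]
  apply Polynomial.funext
  intro r
  have hS : ((Real.sqrt (529984 * a ^ 4 - 1680 * a ^ 2 + 5) : ℝ) : ℂ) ^ 2 =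
      529984 * (a : ℂ) ^ 4 - 1680 * (a : ℂ) ^ 2 + 5 := by
    rw [← Complex.ofReal_pow, Real.sq_sqrt hdisc]
    push_cast
    ring
  simp only [eval_mul, eval_add, eval_sub, eval_pow, eval_neg, eval_one, eval_X, eval_C,
    eval_ofNat, eval_zero]
  linear_combination (-(730:ℂ) * (a:ℂ)^2 * (r-2)^2 + 729 * (a:ℂ)^4 * (Complex.I^2 - 1)
      + 675 * (a:ℂ)^2) * Complex.I_sq + (1/4 : ℂ) * hS

theorem eigenvalues_H4 (a : ℝ)
    (hdisc : 0 ≤ 529984 * a ^ 4 - 1680 * a ^ 2 + 5) :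
    ((H4 a).charpoly =
        ((X - C 2) ^ 2 -
            C (((6 - 1460 * a ^ 2 + 2 * Real.sqrt (529984 * a ^ 4 - 1680 * a ^ 2 + 5)) / 4 : ℝ) : ℂ)) *
        ((X - C 2) ^ 2 -
            C (((6 - 1460 * a ^ 2 - 2 * Real.sqrt (529984 * a ^ 4 - 1680 * a ^ 2 + 5)) / 4 : ℝ) : ℂ))) ∧
    (∀ ε₁ ε₂ : ℝ, (ε₁ = 1 ∨ ε₁ = -1) → (ε₂ = 1 ∨ ε₂ = -1) →
      0 ≤ 6 - 1460 * a ^ 2 + ε₂ * (2 * Real.sqrt (529984 * a ^ 4 - 1680 * a ^ 2 + 5)) →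
      ((2 + ε₁ * ((1 : ℝ) / 2) *
          Real.sqrt (6 - 1460 * a ^ 2 + ε₂ * (2 * Real.sqrt (529984 * a ^ 4 - 1680 * a ^ 2 + 5))) : ℝ) : ℂ)
        ∈ spectrum ℂ (H4 a)) := by
  refine ⟨charpoly_H4 a hdisc, ?_⟩
  intro ε₁ ε₂ h1 h2 hE
  apply mem_spectrum_of_eval
  rw [charpoly_H4 a hdisc]
  have hε₁ : ε₁ ^ 2 = 1 := by rcases h1 with h | h <;> rw [h] <;> norm_num
  have hsqE : Real.sqrt (6 - 1460 * a ^ 2 + ε₂ * (2 * Real.sqrt (529984 * a ^ 4 - 1680 * a ^ 2 + 5))) ^ 2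
      = 6 - 1460 * a ^ 2 + ε₂ * (2 * Real.sqrt (529984 * a ^ 4 - 1680 * a ^ 2 + 5)) :=
    Real.sq_sqrt hE
  simp only [eval_mul, eval_sub, eval_pow, eval_X, eval_C]
  rcases h2 with h2 | h2 <;> subst h2
  · apply mul_eq_zero_of_left
    have hr : (2 + ε₁ * ((1 : ℝ) / 2) *
        Real.sqrt (6 - 1460 * a ^ 2 + 1 * (2 * Real.sqrt (529984 * a ^ 4 - 1680 * a ^ 2 + 5))) - 2) ^ 2
        - (6 - 1460 * a ^ 2 + 2 * Real.sqrt (529984 * a ^ 4 - 1680 * a ^ 2 + 5)) / 4 = 0 := by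
      linear_combination (Real.sqrt (6 - 1460 * a ^ 2 + 1 * (2 * Real.sqrt (529984 * a ^ 4 - 1680 * a ^ 2 + 5))) ^ 2 / 4) * hε₁ + (1/4 : ℝ) * hsqE
    have := congrArg (Complex.ofReal) hr
    push_cast at this ⊢
    linear_combination this
  · apply mul_eq_zero_of_right
    have hr : (2 + ε₁ * ((1 : ℝ) / 2) *
        Real.sqrt (6 - 1460 * a ^ 2 + (-1) * (2 * Real.sqrt (529984 * a ^ 4 - 1680 * a ^ 2 + 5))) - 2) ^ 2
        - (6 - 1460 * a ^ 2 - 2 * Real.sqrt (529984 * a ^ 4 - 1680 * a ^ 2 + 5)) / 4 = 0 := by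
      linear_combination (Real.sqrt (6 - 1460 * a ^ 2 + (-1) * (2 * Real.sqrt (529984 * a ^ 4 - 1680 * a ^ 2 + 5))) ^ 2 / 4) * hε₁ + (1/4 : ℝ) * hsqE
    have := congrArg (Complex.ofReal) hr
    push_cast at this ⊢
    linear_combination this
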